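/- For every μ ∈ 𝐌, the Hoover coefficient satisfies H(μ) = F_μ(m_μ) − L_μ(F_μ(m_μ)). -/

import Mathlib

open MeasureTheory Filter Topology

noncomputable section

/-- The mean of a measure on `ℝ`. -/
def mMean (μ : Measure ℝ) : ℝ := ∫ x, x ∂μ

/-- `μ ∈ 𝐌`: a Borel probability measure on `ℝ₊` (modelled as a measure on `ℝ` giving no
mass to negative numbers) with finite nonzero mean. -/
def MemM (μ : Measure ℝ) : Prop :=
  IsProbabilityMeasure μ ∧ μ {x | x < 0} = 0 ∧ Integrable id μ ∧ 0 < mMean μ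

/-- The cumulative distribution function `F_μ(x) = μ([0,x])`. -/
def cdfR (μ : Measure ℝ) (x : ℝ) : ℝ := (μ (Set.Icc 0 x)).toReal

/-- The quantile function `Q_μ(p) = inf {x ∈ ℝ₊ : F_μ(x) ≥ p}`. -/
def quant (μ : Measure ℝ) (p : ℝ) : ℝ := sInf {x : ℝ | 0 ≤ x ∧ p ≤ cdfR μ x}

/-- The Lorenz function `L_μ(p) = (∫_0^p Q_μ(t) dt) / m_μ`. -/
def lorenz (μ : Measure ℝ) (p : ℝ) : ℝ := (∫ t in (0:ℝ)..p, quant μ t) / mMean μ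

/-- The pseudo-Lorenz function `Λ_μ(p) = (∫_{[0,Q_μ(p)]} u dμ(u)) / m_μ` for `p ∈ [0,1)`,
with `Λ_μ(1) = 1`. -/
def pseudoLorenz (μ : Measure ℝ) (p : ℝ) : ℝ :=
  if p = 1 then 1 else (∫ u in Set.Icc (0:ℝ) (quant μ p), u ∂μ) / mMean μ

/-- The Gini coefficient `G(μ) = (∫∫ |x-y| d(μ⊗μ)) / (2 m_μ)`. -/
def gini (μ : Measure ℝ) : ℝ := (∫ z : ℝ × ℝ, |z.1 - z.2| ∂(μ.prod μ)) / (2 * mMean μ)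

/-- The Hoover coefficient `H(μ) = (∫ |x - m_μ| dμ) / (2 m_μ)`. -/
def hoover (μ : Measure ℝ) : ℝ := (∫ x, |x - mMean μ| ∂μ) / (2 * mMean μ)

/-- The Wasserstein-1 distance `W₁(μ,ν) = ∫_0^1 |Q_μ - Q_ν|`. -/
def W1 (μ ν : Measure ℝ) : ℝ := ∫ t in (0:ℝ)..1, |quant μ t - quant ν t|

/-- Weak convergence of a sequence of measures: convergence of integrals of all bounded
continuous functions. -/
def WeakCv (μs : ℕ → Measure ℝ) (ν : Measure ℝ) : Prop :=
  ∀ f : ℝ → ℝ, Continuous f → (∃ C : ℝ, ∀ x, |f x| ≤ C) →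
    Tendsto (fun n => ∫ x, f x ∂(μs n)) atTop (𝓝 (∫ x, f x ∂ν))

/-- Uniform integrability of a family of measures on `ℝ₊`:
`sup_i ∫_{(α,∞)} x dμ_i(x) → 0` as `α → +∞`. -/
def UnifInt {ι : Type*} (μs : ι → Measure ℝ) : Prop :=
  ∀ ε > (0:ℝ), ∃ A : ℝ, ∀ α ≥ A, ∀ i, (∫ x in Set.Ioi α, x ∂(μs i)) ≤ ε

end

open Set

section Aux

variable {μ : Measure ℝ}

lemma cdfR_mono (μ : Measure ℝ) [IsFiniteMeasure μ] : Monotone (cdfR μ) := fun a b hab =>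
  ENNReal.toReal_mono (measure_ne_top μ _) (measure_mono (Icc_subset_Icc_right hab))

lemma measure_Iic_eq (hneg : μ {x | x < 0} = 0) (x : ℝ) :
    μ (Set.Iic x) = μ (Set.Icc 0 x) := by
  refine le_antisymm ?_ (measure_mono Set.Icc_subset_Iic_self)
  calc μ (Set.Iic x) ≤ μ (Set.Icc 0 x ∪ Set.Iio 0) := by
        refine measure_mono fun y hy => ?_
        rcases lt_or_ge y 0 with h | h
        · exact Or.inr h
        · exact Or.inl ⟨h, hy⟩
    _ ≤ μ (Set.Icc 0 x) + μ (Set.Iio 0) := measure_union_le _ _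
    _ = μ (Set.Icc 0 x) := by
        rw [show Set.Iio (0:ℝ) = {x | x < 0} from rfl, hneg, add_zero]

lemma le_cdfR_of_forall (μ : Measure ℝ) [IsFiniteMeasure μ] {t x : ℝ}
    (h : ∀ ε > (0:ℝ), t ≤ cdfR μ (x + ε)) : t ≤ cdfR μ x := by
  have hiInter : ⋂ n : ℕ, Set.Icc 0 (x + 1/(n+1)) = Set.Icc 0 x := by
    ext y
    simp only [Set.mem_iInter, Set.mem_Icc]
    constructor
    · intro hy
      refine ⟨(hy 0).1, ?_⟩
      by_contra hxy
      push_neg at hxy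
      obtain ⟨n, hn⟩ := exists_nat_one_div_lt (sub_pos.mpr hxy)
      have := (hy n).2
      linarith
    · intro hy n
      have : (0:ℝ) < 1/(n+1) := by positivity
      exact ⟨hy.1, by linarith [hy.2]⟩
  have hI : Tendsto (fun n : ℕ => μ (Set.Icc 0 (x + 1/(n+1)))) atTop (𝓝 (μ (Set.Icc 0 x))) := by
    have := tendsto_measure_iInter_atTop (μ := μ)
      (s := fun n : ℕ => Set.Icc 0 (x + 1/(n+1)))
      (fun n => measurableSet_Icc.nullMeasurableSet)
      (fun a b hab => Set.Icc_subset_Icc_right (by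
        have hcast : (a:ℝ) ≤ (b:ℝ) := Nat.cast_le.mpr hab
        have : (1:ℝ)/(b+1) ≤ 1/(a+1) :=
          one_div_le_one_div_of_le (by positivity) (by linarith)
        linarith))
      ⟨0, measure_ne_top μ _⟩
    rwa [hiInter] at this
  have hTR : Tendsto (fun n : ℕ => cdfR μ (x + 1/(n+1))) atTop (𝓝 (cdfR μ x)) :=
    (ENNReal.tendsto_toReal (measure_ne_top μ _)).comp hI
  exact ge_of_tendsto' hTR fun n => h _ (by positivity)

lemma quant_nonneg (μ : Measure ℝ) (t : ℝ) : 0 ≤ quant μ t :=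
  Real.sInf_nonneg (fun x hx => hx.1)

lemma quant_le_iff (μ : Measure ℝ) [IsFiniteMeasure μ] {t x w : ℝ} (hw : 0 ≤ w)
    (htw : t ≤ cdfR μ w) (hx : 0 ≤ x) :
    quant μ t ≤ x ↔ t ≤ cdfR μ x := by
  have hbdd : BddBelow {y : ℝ | 0 ≤ y ∧ t ≤ cdfR μ y} := ⟨0, fun y hy => hy.1⟩
  have hne : Set.Nonempty {y : ℝ | 0 ≤ y ∧ t ≤ cdfR μ y} := ⟨w, hw, htw⟩
  constructor
  · intro h
    refine le_cdfR_of_forall μ fun ε hε => ?_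
    obtain ⟨y, hy, hyx⟩ := exists_lt_of_csInf_lt hne (lt_of_le_of_lt h (lt_add_of_pos_right x hε))
    exact hy.2.trans (cdfR_mono μ hyx.le)
  · intro h
    exact csInf_le hbdd ⟨hx, h⟩

lemma key_lorenz (μ : Measure ℝ) (hμ : MemM μ) :
    ∫ t in (0:ℝ)..(cdfR μ (mMean μ)), quant μ t =
      ∫ x in Set.Icc (0:ℝ) (mMean μ), x ∂μ := by
  obtain ⟨hprob, hneg, hint, hm⟩ := hμ
  have hint' : Integrable (fun x : ℝ => x) μ := hint
  set m := mMean μ with hm_def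
  set p := cdfR μ m with hp_def
  have hm0 : (0:ℝ) ≤ m := hm.le
  have h0p : (0:ℝ) ≤ p := ENNReal.toReal_nonneg
  set Q' : ℝ → ℝ := fun t => quant μ (min t p) with hQ'_def
  have hQ'mono : Monotone Q' := by
    intro a b hab
    refine csInf_le_csInf ⟨0, fun y hy => hy.1⟩ ⟨m, hm0, ?_⟩ ?_
    · exact min_le_right b p
    · intro y hy
      exact ⟨hy.1, le_trans (min_le_min_right p hab) hy.2⟩
  have hQ'meas : Measurable Q' := hQ'mono.measurable
  have hmap : Measure.map Q' (volume.restrict (Set.Ioc 0 p)) = μ.restrict (Set.Icc 0 m) := by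
    haveI : IsFiniteMeasure (volume.restrict (Set.Ioc (0:ℝ) p)) := by
      constructor
      rw [Measure.restrict_apply_univ, Real.volume_Ioc]
      exact ENNReal.ofReal_lt_top
    refine MeasureTheory.Measure.ext_of_Iic _ _ fun x => ?_
    rw [Measure.map_apply hQ'meas measurableSet_Iic,
      Measure.restrict_apply (hQ'meas measurableSet_Iic),
      Measure.restrict_apply measurableSet_Iic]
    rcases lt_or_ge x 0 with hx | hx
    · have h1 : Q' ⁻¹' Set.Iic x ∩ Set.Ioc 0 p = ∅ := by
        ext t
        simp only [Set.mem_inter_iff, Set.mem_preimage, Set.mem_Iic, Set.mem_Ioc,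
          Set.mem_empty_iff_false, iff_false]
        rintro ⟨h1, _⟩
        exact absurd (lt_of_le_of_lt h1 hx) (not_lt.mpr (quant_nonneg μ _))
      have h2 : Set.Iic x ∩ Set.Icc 0 m = ∅ := by
        ext y
        simp only [Set.mem_inter_iff, Set.mem_Iic, Set.mem_Icc, Set.mem_empty_iff_false, iff_false]
        rintro ⟨h1, h2, _⟩
        linarith
      rw [h1, h2, measure_empty, measure_empty]
    · have h1 : Q' ⁻¹' Set.Iic x ∩ Set.Ioc 0 p = Set.Ioc 0 (min p (cdfR μ x)) := by
        ext t
        simp only [Set.mem_inter_iff, Set.mem_preimage, Set.mem_Iic, Set.mem_Ioc, le_min_iff]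
        constructor
        · rintro ⟨h1, h2, h3⟩
          rw [hQ'_def] at h1
          simp only [min_eq_left h3] at h1
          exact ⟨h2, h3, (quant_le_iff μ hm0 h3 hx).mp h1⟩
        · rintro ⟨h1, h2, h3⟩
          refine ⟨?_, h1, h2⟩
          show quant μ (min t p) ≤ x
          rw [min_eq_left h2]
          exact (quant_le_iff μ hm0 h2 hx).mpr h3
      have h2 : Set.Iic x ∩ Set.Icc 0 m = Set.Icc 0 (min x m) := by
        ext y
        simp only [Set.mem_inter_iff, Set.mem_Iic, Set.mem_Icc, le_min_iff]
        tauto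
      rw [h1, h2, Real.volume_Ioc, sub_zero]
      have : μ (Set.Icc 0 (min x m)) = ENNReal.ofReal (cdfR μ (min x m)) := by
        rw [cdfR, ENNReal.ofReal_toReal (measure_ne_top μ _)]
      rw [this]
      congr 1
      rcases le_total x m with h | h
      · rw [min_eq_left h, min_eq_right (cdfR_mono μ h)]
      · rw [min_eq_right h, ← hp_def, min_eq_left (cdfR_mono μ h)]
  rw [intervalIntegral.integral_of_le h0p]
  have hcongr : ∫ t in Set.Ioc (0:ℝ) p, quant μ t = ∫ t in Set.Ioc (0:ℝ) p, Q' t := by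
    refine setIntegral_congr_fun measurableSet_Ioc fun t ht => ?_
    simp [hQ'_def, min_eq_left ht.2]
  rw [hcongr]
  have := MeasureTheory.integral_map (φ := Q') (μ := volume.restrict (Set.Ioc (0:ℝ) p))
    (f := fun y : ℝ => y) hQ'meas.aemeasurable
    (by exact measurable_id.aestronglyMeasurable)
  rw [hmap] at this
  exact this.symm

end Aux

/-- `H(μ) = F_μ(m_μ) − L_μ(F_μ(m_μ))`. -/
theorem hoover_eq_cdf_mean_sub_lorenz (μ : Measure ℝ) (hμ : MemM μ) :
    hoover μ = cdfR μ (mMean μ) - lorenz μ (cdfR μ (mMean μ)) := by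
  have hkey := key_lorenz μ hμ
  obtain ⟨hprob, hneg, hint, hm⟩ := hμ
  have hint' : Integrable (fun x : ℝ => x) μ := hint
  set m := mMean μ with hm_def
  set p := cdfR μ m with hp_def
  have hIic : μ (Set.Iic m) = μ (Set.Icc 0 m) := measure_Iic_eq hneg m
  have ha : (μ (Set.Iic m)).toReal = p := by rw [hIic]; rfl
  set a := (μ (Set.Iic m)).toReal with ha_def
  set b := (μ (Set.Ioi m)).toReal with hb_def
  have hab : a + b = 1 := by
    rw [ha_def, hb_def, ← ENNReal.toReal_add (measure_ne_top μ _) (measure_ne_top μ _),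
      ← Set.compl_Iic, measure_add_measure_compl measurableSet_Iic, measure_univ,
      ENNReal.toReal_one]
  set c := ∫ x in Set.Iic m, x ∂μ with hc_def
  set d := ∫ x in Set.Ioi m, x ∂μ with hd_def
  have hcd : c + d = m := by
    rw [hc_def, hd_def, ← Set.compl_Iic]
    rw [integral_add_compl measurableSet_Iic hint']
    rfl
  have habs : Integrable (fun x => |x - m|) μ := (hint'.sub (integrable_const m)).abs
  have hsplit : ∫ x, |x - m| ∂μ
      = ∫ x in Set.Iic m, |x - m| ∂μ + ∫ x in Set.Ioi m, |x - m| ∂μ := by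
    rw [← Set.compl_Iic, integral_add_compl measurableSet_Iic habs]
  have hIic_int : ∫ x in Set.Iic m, |x - m| ∂μ = m * a - c := by
    have h1 : ∫ x in Set.Iic m, |x - m| ∂μ = ∫ x in Set.Iic m, (m - x) ∂μ := by
      refine setIntegral_congr_fun measurableSet_Iic fun x hx => ?_
      rw [abs_of_nonpos (sub_nonpos.mpr hx), neg_sub]
    rw [h1, integral_sub (integrable_const m).restrict hint'.restrict,
      setIntegral_const]
    simp [ha_def, hc_def, mul_comm, Measure.real]
  have hIoi_int : ∫ x in Set.Ioi m, |x - m| ∂μ = d - m * b := by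
    have h1 : ∫ x in Set.Ioi m, |x - m| ∂μ = ∫ x in Set.Ioi m, (x - m) ∂μ := by
      refine setIntegral_congr_fun measurableSet_Ioi fun x hx => ?_
      rw [abs_of_nonneg (sub_nonneg.mpr (le_of_lt hx))]
    rw [h1, integral_sub (hint'.restrict) (integrable_const m).restrict,
      setIntegral_const]
    simp [hb_def, hd_def, mul_comm, Measure.real]
  have hcI : c = ∫ x in Set.Icc (0:ℝ) m, x ∂μ := by
    refine setIntegral_congr_set ?_
    rw [MeasureTheory.ae_eq_set]
    constructor
    · refine measure_mono_null (fun y hy => ?_) hneg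
      simp only [Set.mem_diff, Set.mem_Iic, Set.mem_Icc, not_and] at hy
      exact not_le.mp fun h0 => (hy.2 h0) hy.1
    · rw [Set.diff_eq_empty.mpr Set.Icc_subset_Iic_self, measure_empty]
  have habs_val : ∫ x, |x - m| ∂μ = 2 * (m * a - c) := by
    rw [hsplit, hIic_int, hIoi_int]
    have hd' : d = m - c := by linarith
    have hb' : b = 1 - a := by linarith
    rw [hd', hb']; ring
  have hlor : lorenz μ p = c / m := by
    show (∫ t in (0:ℝ)..p, quant μ t) / m = c / m
    rw [hkey, ← hcI]
  rw [hoover, ← hm_def, habs_val, hlor, ha]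
  field_simp
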